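/- Let Z be an (n+m)×(n+m) block matrix over an ordered field, Z = [[A, 0],[P, W]] + E where A is n×n, W is m×m, P is m×n nonnegative, and E has entries of strictly higher valuation (over the Puiseux field). Suppose Ax = λx with x positive and λ − W invertible with nonnegative inverse, and λ strictly exceeds every eigenvalue of W in absolute value. Then the vector p = x ⊕ (λ − W)⁻¹Px satisfies Z p = λ p + o(terms of higher valuation), and p is nonnegative. -/

import Mathlib

/-- equation (26) in Process B: the glued approximate Perron vector.
Over an ordered field, let `Z₀ = [[A, 0], [P, W]]` be a block lower-triangular matrix
with `P` nonnegative, let `x > 0` satisfy `A·x = λ·x`, and suppose `λ·Id − W` has a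
nonnegative (two-sided) inverse `M` and `λ` strictly dominates in modulus every
eigenvalue `a + b√−1` of `W` over `F[X]/(X²+1)`.  Then the vector
`p = x ⊕ (λ − W)⁻¹·P·x` is nonnegative and satisfies `Z₀·p = λ·p` (so that for
`Z = Z₀ + E` with `E` of higher valuation, `Z·p = λ·p + o(higher-order terms)`). -/
theorem process_B_glued_eigenvector (F : Type*) [Field F] [LinearOrder F] [IsStrictOrderedRing F] (n m : ℕ)
    (A : Matrix (Fin n) (Fin n) F) (W : Matrix (Fin m) (Fin m) F)
    (P : Matrix (Fin m) (Fin n) F) (hP : ∀ i j, 0 ≤ P i j)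
    (l : F) (x : Fin n → F) (hx : ∀ i, 0 < x i) (hA : A.mulVec x = l • x)
    (M : Matrix (Fin m) (Fin m) F)
    (hM1 : (l • (1 : Matrix (Fin m) (Fin m) F) - W) * M = 1)
    (hM2 : M * (l • (1 : Matrix (Fin m) (Fin m) F) - W) = 1)
    (hMnn : ∀ i j, 0 ≤ M i j)
    (hspec : ∀ a b : F,
      Polynomial.aeval
          (algebraMap F (AdjoinRoot (Polynomial.X ^ 2 + 1 : Polynomial F)) a +
            algebraMap F (AdjoinRoot (Polynomial.X ^ 2 + 1 : Polynomial F)) b *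
              AdjoinRoot.root (Polynomial.X ^ 2 + 1 : Polynomial F))
          W.charpoly = 0 →
        a ^ 2 + b ^ 2 < l ^ 2) :
    (Matrix.fromBlocks A 0 P W).mulVec (Sum.elim x (M.mulVec (P.mulVec x))) =
        l • Sum.elim x (M.mulVec (P.mulVec x)) ∧
    ∀ i, 0 ≤ Sum.elim x (M.mulVec (P.mulVec x)) i := by
  constructor
  · funext i
    cases i with
    | inl i =>
      have : (Matrix.fromBlocks A 0 P W).mulVec (Sum.elim x (M.mulVec (P.mulVec x))) (Sum.inl i)
          = A.mulVec x i := by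
        simp [Matrix.fromBlocks_mulVec]
      rw [this, hA]; simp
    | inr i =>
      have key : W * M = l • M - 1 := by
        have := hM1
        rw [Matrix.sub_mul] at this
        have h2 : l • M - W * M = 1 := by simpa [Matrix.smul_mul] using this
        rw [eq_sub_iff_add_eq, ← h2]; abel
      have hWM : W.mulVec (M.mulVec (P.mulVec x)) = l • M.mulVec (P.mulVec x) - P.mulVec x := by
        rw [Matrix.mulVec_mulVec, key]
        simp [Matrix.sub_mul, Matrix.sub_mulVec, Matrix.smul_mul, Matrix.smul_mulVec, Matrix.mulVec_mulVec]
      have : (Matrix.fromBlocks A 0 P W).mulVec (Sum.elim x (M.mulVec (P.mulVec x))) (Sum.inr i)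
          = P.mulVec x i + W.mulVec (M.mulVec (P.mulVec x)) i := by
        simp [Matrix.fromBlocks_mulVec]
      rw [this, hWM]
      simp
  · intro i
    cases i with
    | inl i => exact (hx i).le
    | inr i =>
      simp only [Sum.elim_inr, Matrix.mulVec, dotProduct]
      apply Finset.sum_nonneg
      intro j _
      exact mul_nonneg (hMnn i j) (Finset.sum_nonneg fun k _ => mul_nonneg (hP j k) (hx k).le)
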